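/- For θ ∈ ℝ let Rx(θ) be the 2×2 unitary matrix with rows (cos(θ/2), −i·sin(θ/2)) and (−i·sin(θ/2), cos(θ/2)). Let v, w ∈ {0,1}^n be binary vectors differing in exactly one coordinate, and let ρ and σ be the density matrices of the angle-encoded pure states |v⟩ = ⊗_{i=1}^n Rx(v_i)|0⟩ and |w⟩ = ⊗_{i=1}^n Rx(w_i)|0⟩. Then the trace distance satisfies D(ρ,σ) = sin(1/2). -/

import Mathlib

open Matrix BigOperators
open scoped ComplexOrder

namespace QDP

variable {n : Type*} [Fintype n] [DecidableEq n]

/-- Trace distance `D(ρ,σ) = (1/2) tr |ρ - σ|`, where `|A| = sqrt (Aᴴ A)`. -/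
noncomputable def traceDist (ρ σ : Matrix n n ℂ) : ℝ :=
  (1 / 2 : ℝ) *
    (((Matrix.posSemidef_conjTranspose_mul_self (ρ - σ)).isHermitian.eigenvectorUnitary.1 *
      diagonal (((↑) : ℝ → ℂ) ∘ (√·) ∘ (Matrix.posSemidef_conjTranspose_mul_self (ρ - σ)).isHermitian.eigenvalues) *
      (star (Matrix.posSemidef_conjTranspose_mul_self (ρ - σ)).isHermitian.eigenvectorUnitary :
        Matrix n n ℂ)).trace).re

/-- A density matrix: positive semidefinite with trace one. -/
def IsDensity (ρ : Matrix n n ℂ) : Prop := ρ.PosSemidef ∧ ρ.trace = 1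

/-- The largest eigenvalue of a (Hermitian) matrix. -/
noncomputable def lamMax (M : Matrix n n ℂ) : ℝ :=
  if h : M.IsHermitian then ⨆ i, h.eigenvalues i else 0

/-- The smallest eigenvalue of a (Hermitian) matrix. -/
noncomputable def lamMin (M : Matrix n n ℂ) : ℝ :=
  if h : M.IsHermitian then ⨅ i, h.eigenvalues i else 0

/-- Application of a quantum channel given by Kraus matrices. -/
noncomputable def applyChan {ι : Type*} [Fintype ι] (E : ι → Matrix n n ℂ)
    (ρ : Matrix n n ℂ) : Matrix n n ℂ := ∑ j, E j * ρ * (E j)ᴴ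

/-- The dual of a quantum channel given by Kraus matrices. -/
noncomputable def dualChan {ι : Type*} [Fintype ι] (E : ι → Matrix n n ℂ)
    (M : Matrix n n ℂ) : Matrix n n ℂ := ∑ j, (E j)ᴴ * M * E j

/-- `(ε,δ)`-differential privacy within `η` of the quantum algorithm `(E, M)`. -/
def IsDP {ι : Type*} [Fintype ι] {O : Type*} [Fintype O]
    (E : ι → Matrix n n ℂ) (M : O → Matrix n n ℂ) (ε δ η : ℝ) : Prop :=
  ∀ ρ σ : Matrix n n ℂ, IsDensity ρ → IsDensity σ → traceDist ρ σ ≤ η →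
    ∀ S : Finset O,
      (∑ k ∈ S, (M k * applyChan E ρ).trace).re ≤
        Real.exp ε * (∑ k ∈ S, (M k * applyChan E σ).trace).re + δ

/-- Rank-one projection `|ψ⟩⟨ψ|`. -/
noncomputable def proj (ψ : n → ℂ) : Matrix n n ℂ := vecMulVec ψ (star ψ)

end QDP

namespace QDP

/-- The rotation gate `Rx(θ)` about the x-axis. -/
noncomputable def Rx (θ : ℝ) : Matrix (Fin 2) (Fin 2) ℂ :=
  !![((Real.cos (θ / 2) : ℝ) : ℂ), -Complex.I * ((Real.sin (θ / 2) : ℝ) : ℂ);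
     -Complex.I * ((Real.sin (θ / 2) : ℝ) : ℂ), ((Real.cos (θ / 2) : ℝ) : ℂ)]

/-- The basis state `|0⟩ ∈ ℂ²`. -/
def ket0 : Fin 2 → ℂ := fun i => if i = 0 then 1 else 0

/-- Angle encoding of a classical vector `v ∈ ℝⁿ`:
the Kronecker product `Rx(v₁)|0⟩ ⊗ ⋯ ⊗ Rx(vₙ)|0⟩`, as a vector indexed by `Fin m → Fin 2`. -/
noncomputable def angleEncode {m : ℕ} (v : Fin m → ℝ) : (Fin m → Fin 2) → ℂ :=
  fun f => ∏ i, (Rx (v i) *ᵥ ket0) (f i)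

end QDP

namespace QDP

set_option linter.unusedSectionVars false

variable {n : Type*} [Fintype n] [DecidableEq n]

lemma Rx_mulVec_ket0 (θ : ℝ) :
    Rx θ *ᵥ ket0 = ![((Real.cos (θ/2) : ℝ) : ℂ), -Complex.I * ((Real.sin (θ/2) : ℝ) : ℂ)] := by
  funext i
  fin_cases i <;> simp [Rx, ket0, mulVec, dotProduct, Fin.sum_univ_two]

lemma qubit_overlap (a b : ℝ) :
    ∑ x : Fin 2, star ((Rx a *ᵥ ket0) x) * ((Rx b *ᵥ ket0) x)
      = ((Real.cos ((a - b) / 2) : ℝ) : ℂ) := by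
  have h : (a - b) / 2 = a / 2 - b / 2 := by ring
  rw [h, Real.cos_sub, Rx_mulVec_ket0, Rx_mulVec_ket0, Fin.sum_univ_two]
  simp only [Matrix.cons_val_zero, Matrix.cons_val_one, Matrix.head_cons,
    Complex.star_def, _root_.map_mul, map_neg, Complex.conj_I, Complex.conj_ofReal,
    Complex.ofReal_add, Complex.ofReal_mul]
  linear_combination -((Real.sin (a/2) : ℂ) * (Real.sin (b/2) : ℂ)) * Complex.I_mul_I

lemma dot_angleEncode {m : ℕ} (v w : Fin m → ℝ) :
    star (angleEncode v) ⬝ᵥ angleEncode w =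
      ∏ i, ((Real.cos ((v i - w i) / 2) : ℝ) : ℂ) := by
  calc star (angleEncode v) ⬝ᵥ angleEncode w
      = ∑ f : Fin m → Fin 2, ∏ i, (star ((Rx (v i) *ᵥ ket0) (f i)) * ((Rx (w i) *ᵥ ket0) (f i))) := by
        refine Finset.sum_congr rfl fun f _ => ?_
        simp [angleEncode, star_prod, Finset.prod_mul_distrib]
    _ = ∏ i, ∑ x : Fin 2, star ((Rx (v i) *ᵥ ket0) x) * ((Rx (w i) *ᵥ ket0) x) := by
        rw [Finset.prod_univ_sum, Fintype.piFinset_univ]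
    _ = _ := Finset.prod_congr rfl fun i _ => qubit_overlap _ _

lemma mul_vecMulVec (a b c d : n → ℂ) :
    vecMulVec a b * vecMulVec c d = (b ⬝ᵥ c) • vecMulVec a d := by
  ext i j
  simp only [Matrix.mul_apply, vecMulVec_apply, Matrix.smul_apply, smul_eq_mul, dotProduct,
    Finset.sum_mul]
  exact Finset.sum_congr rfl fun k _ => by ring

lemma conjTranspose_vecMulVec (a b : n → ℂ) :
    (vecMulVec a b)ᴴ = vecMulVec (star b) (star a) := by
  ext i j
  simp [conjTranspose_apply, vecMulVec_apply, mul_comm]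

lemma trace_vecMulVec (a b : n → ℂ) : (vecMulVec a b).trace = a ⬝ᵥ b := by
  simp [trace, vecMulVec_apply, dotProduct, Matrix.diag]

end QDP

open QDP in
/-- Binary classical vectors differing in exactly one coordinate are angle-encoded into
quantum states at trace distance `sin(1/2)`. -/
theorem traceDist_angleEncode_binary {m : ℕ} (v w : Fin m → ℝ)
    (hv : ∀ i, v i = 0 ∨ v i = 1) (hw : ∀ i, w i = 0 ∨ w i = 1)
    (j : Fin m) (hj : v j ≠ w j) (hvw : ∀ i, i ≠ j → v i = w i) :
    traceDist (proj (angleEncode v)) (proj (angleEncode w)) = Real.sin (1 / 2) := by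
  classical
  set ψ := angleEncode v with hψ
  set φ := angleEncode w with hφ
  set c : ℝ := Real.cos (1/2) with hc_def
  set s : ℝ := Real.sin (1/2) with hs_def
  have hs_pos : 0 < s := Real.sin_pos_of_pos_of_lt_pi (by norm_num)
    (by linarith [Real.pi_gt_three])
  have hsC : ((s : ℂ)) ≠ 0 := by exact_mod_cast hs_pos.ne'
  -- inner products
  have hvv : star ψ ⬝ᵥ ψ = 1 := by rw [hψ, dot_angleEncode]; simp
  have hww : star φ ⬝ᵥ φ = 1 := by rw [hφ, dot_angleEncode]; simp
  have key : ∀ (x y : Fin m → ℝ), (∀ i, x i = 0 ∨ x i = 1) → (∀ i, y i = 0 ∨ y i = 1) →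
      x j ≠ y j → (∀ i, i ≠ j → x i = y i) →
      star (angleEncode x) ⬝ᵥ angleEncode y = (c : ℂ) := by
    intro x y hx hy hxyj hxy
    rw [dot_angleEncode]
    rw [Finset.prod_eq_single j]
    · rcases hx j with h0 | h1 <;> rcases hy j with h0' | h1'
      · exact absurd (h0.trans h0'.symm) hxyj
      · rw [h0, h1']
        norm_num [show ((0:ℝ)-1)/2 = -(1/2) by norm_num, Real.cos_neg, hc_def]
      · rw [h1, h0']
        norm_num [hc_def]
      · exact absurd (h1.trans h1'.symm) hxyj
    · intro i _ hi; rw [hxy i hi]; simp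
    · simp
  have hvwc : star ψ ⬝ᵥ φ = (c : ℂ) := key v w hv hw hj hvw
  have hwvc : star φ ⬝ᵥ ψ = (c : ℂ) :=
    key w v hw hv (Ne.symm hj) (fun i hi => (hvw i hi).symm)
  -- matrices
  set P := proj ψ with hP
  set Q := proj φ with hQ
  set R := vecMulVec ψ (star φ) with hR
  set R' := vecMulVec φ (star ψ) with hR'
  set A := P - Q with hA
  have mPP : P * P = P := by rw [hP, proj, QDP.mul_vecMulVec, hvv, one_smul]
  have mQQ : Q * Q = Q := by rw [hQ, proj, QDP.mul_vecMulVec, hww, one_smul]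
  have mPQ : P * Q = (c : ℂ) • R := by rw [hP, hQ, proj, proj, QDP.mul_vecMulVec, hvwc, hR]
  have mQP : Q * P = (c : ℂ) • R' := by rw [hP, hQ, proj, proj, QDP.mul_vecMulVec, hwvc, hR']
  have mRP : R * P = (c : ℂ) • P := by rw [hR, hP, proj, QDP.mul_vecMulVec, hwvc]
  have mRQ : R * Q = R := by rw [hR, hQ, proj, QDP.mul_vecMulVec, hww, one_smul]
  have mR'P : R' * P = R' := by rw [hR', hP, proj, QDP.mul_vecMulVec, hvv, one_smul]
  have mR'Q : R' * Q = (c : ℂ) • Q := by rw [hR', hQ, proj, QDP.mul_vecMulVec, hvwc]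
  have hsc : ((s : ℂ))^2 = 1 - (c : ℂ)^2 := by
    have hr : (s:ℝ)^2 = 1 - c^2 := by
      have := Real.sin_sq_add_cos_sq (1/2 : ℝ); rw [hc_def, hs_def]; linarith
    calc ((s:ℂ))^2 = (((s^2 : ℝ)) : ℂ) := by push_cast; ring
      _ = (((1 - c^2 : ℝ)) : ℂ) := by rw [hr]
      _ = 1 - (c:ℂ)^2 := by push_cast; ring
  have hA2 : A * A = P + Q - (c : ℂ) • R - (c : ℂ) • R' := by
    rw [hA, sub_mul, mul_sub, mul_sub, mPP, mPQ, mQP, mQQ]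
    abel
  have hA3 : (A * A) * A = ((s : ℂ)^2) • A := by
    rw [hA2, hA]
    simp only [sub_mul, add_mul, mul_sub, smul_mul_assoc, mPP, mPQ, mQP, mQQ, mRP, mRQ,
      mR'P, mR'Q]
    rw [hsc]
    module
  -- Hermiticity
  have hPH : Pᴴ = P := by
    rw [hP, proj, QDP.conjTranspose_vecMulVec, star_star]
  have hQH : Qᴴ = Q := by
    rw [hQ, proj, QDP.conjTranspose_vecMulVec, star_star]
  have hAH : Aᴴ = A := by rw [hA, conjTranspose_sub, hPH, hQH]
  have hAA : Aᴴ * A = A * A := by rw [hAH]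
  have hpsd : Matrix.PosSemidef (A * A) := hAA ▸ Matrix.posSemidef_conjTranspose_mul_self A
  set B := ((s : ℂ))⁻¹ • (A * A) with hB
  have hsinv_nonneg : (0:ℂ) ≤ ((s:ℂ))⁻¹ := by
    rw [show ((s:ℂ))⁻¹ = (((s⁻¹ : ℝ)):ℂ) by push_cast; ring]
    rw [Complex.zero_le_real]
    positivity
  have hB_psd : Matrix.PosSemidef B := by
    constructor
    · show Bᴴ = B
      rw [hB, conjTranspose_smul, hpsd.1.eq]
      congr 1
      rw [show ((s:ℂ))⁻¹ = (((s⁻¹ : ℝ)):ℂ) by push_cast; ring]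
      exact Complex.conj_ofReal _
    · intro x
      exact (hpsd.smul hsinv_nonneg).2 x
  have hB_sq : B ^ 2 = Aᴴ * A := by
    have h4 : (A * A) * (A * A) = ((s:ℂ)^2) • (A * A) := by
      rw [← mul_assoc, hA3, smul_mul_assoc]
    rw [hB, pow_two, smul_mul_smul_comm, h4, smul_smul]
    rw [show ((s:ℂ))⁻¹ * ((s:ℂ))⁻¹ * ((s:ℂ)^2) = 1 by field_simp, one_smul, hAA]
  have hsqrt : ∀ h : ((P - Q)ᴴ * (P - Q)).IsHermitian,
      h.eigenvectorUnitary.1 * diagonal (((↑) : ℝ → ℂ) ∘ (√·) ∘ h.eigenvalues) *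
        (star h.eigenvectorUnitary : Matrix _ _ ℂ) = B := by
    intro h
    have e := h.cfc_eq Real.sqrt
    rw [Matrix.IsHermitian.cfc, Unitary.conjStarAlgAut_apply] at e
    refine Eq.trans e.symm ?_
    change cfc Real.sqrt (Aᴴ * A) = B
    have hBsa : IsSelfAdjoint B := hB_psd.1
    rw [← hB_sq, ← cfc_comp_pow Real.sqrt 2 B]
    have hspec : ∀ x ∈ spectrum ℝ B, 0 ≤ x := by
      open scoped MatrixOrder in
      exact fun x hx => spectrum_nonneg_of_nonneg hB_psd.nonneg hx
    rw [cfc_congr (f := fun x => √(x ^ 2)) (g := id) (fun x hx => Real.sqrt_sq (hspec x hx)), cfc_id ℝ B]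
  have htrP : P.trace = 1 := by
    rw [hP, proj, QDP.trace_vecMulVec, dotProduct_comm, hvv]
  have htrQ : Q.trace = 1 := by
    rw [hQ, proj, QDP.trace_vecMulVec, dotProduct_comm, hww]
  have htrR : R.trace = (c : ℂ) := by
    rw [hR, QDP.trace_vecMulVec, dotProduct_comm, hwvc]
  have htrR' : R'.trace = (c : ℂ) := by
    rw [hR', QDP.trace_vecMulVec, dotProduct_comm, hvwc]
  have htrB : B.trace = 2 * (s : ℂ) := by
    rw [hB, trace_smul, hA2, trace_sub, trace_sub, trace_add, trace_smul, trace_smul,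
      htrP, htrQ, htrR, htrR']
    have : (1 : ℂ) + 1 - (c:ℂ) • (c:ℂ) - (c:ℂ) • (c:ℂ) = 2 * (s:ℂ)^2 := by
      rw [smul_eq_mul, hsc]; ring
    rw [this, smul_eq_mul]
    field_simp
  unfold traceDist
  rw [hsqrt, htrB]
  have : (2 * (s:ℂ)).re = 2 * s := by simp
  rw [this]; ring
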